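/- arXiv:2509.10897 — 2 statements merged into one kernel-verified Lean document; each statement's English description precedes it below -/
import Mathlib

section
/- Let Φ = [Φ_1 Φ_2 … Φ_L] be the horizontal concatenation of matrices Φ_l = (I_H ⊗ S_l) diag(t_l), with S_l as in the SD-CASSI sensing model. Then Φ Φᵀ = Σ_{l=1}^L Φ_l Φ_lᵀ is a positive semidefinite diagonal matrix, i.e., Φ Φᵀ = diag(λ) for some vector λ with λ ≥ 0 componentwise. -/
open Matrix Kronecker

/-- For `Φ = [Φ_1 … Φ_L]` with `Φ_l = (I_H ⊗ S_l) diag(t_l)`,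
the Gram matrix `Φ Φᵀ = ∑ l, Φ_l Φ_lᵀ` is a positive semidefinite
diagonal matrix `diag(λ)`, `λ ⪰ 0`. -/
theorem gram_of_sd_cassi_sensing_matrix_diagonal
    (H W L s : ℕ) (t : Fin L → Fin H × Fin W → ℝ) :
    let S : Fin L → Matrix (Fin (W + s * (L - 1))) (Fin W) ℝ := fun l =>
      Matrix.of fun i j => if (i : ℕ) = s * (l : ℕ) + (j : ℕ) then 1 else 0
    let Φl : Fin L → Matrix (Fin H × Fin (W + s * (L - 1))) (Fin H × Fin W) ℝ := fun l =>
      ((1 : Matrix (Fin H) (Fin H) ℝ) ⊗ₖ S l) * Matrix.diagonal (t l)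
    let Φ : Matrix (Fin H × Fin (W + s * (L - 1))) (Fin L × (Fin H × Fin W)) ℝ :=
      Matrix.of fun i p => Φl p.1 i p.2
    ∃ lam : Fin H × Fin (W + s * (L - 1)) → ℝ,
      (∀ i, 0 ≤ lam i) ∧ Φ * Φᵀ = Matrix.diagonal lam ∧
      Φ * Φᵀ = ∑ l, Φl l * (Φl l)ᵀ := by
  intro S Φl Φ
  have hΦ : ∀ l (i : Fin H × Fin (W + s * (L - 1))) (j : Fin H × Fin W),
      Φl l i j = ((if i.1 = j.1 then (1:ℝ) else 0) *
        (if (i.2 : ℕ) = s * (l : ℕ) + (j.2 : ℕ) then 1 else 0)) * t l j := by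
    intro l i j
    rcases i with ⟨ih, iw⟩; rcases j with ⟨jh, jw⟩
    simp [Φl, S, Matrix.mul_diagonal, Matrix.kroneckerMap_apply, Matrix.one_apply]
  have key : ∀ (i i' : Fin H × Fin (W + s * (L - 1))), i ≠ i' →
      ∀ p : Fin L × (Fin H × Fin W), Φ i p * Φ i' p = 0 := by
    intro i i' h p
    rcases p with ⟨l, j⟩
    show Φl l i j * Φl l i' j = 0
    rw [hΦ, hΦ]
    by_cases h1 : i.1 = j.1
    · by_cases h2 : (i.2 : ℕ) = s * (l : ℕ) + (j.2 : ℕ)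
      · by_cases h3 : i'.1 = j.1
        · by_cases h4 : (i'.2 : ℕ) = s * (l : ℕ) + (j.2 : ℕ)
          · exact absurd (Prod.ext (h1.trans h3.symm) (Fin.ext (h2.trans h4.symm))) h
          · simp [h4]
        · simp [h3]
      · simp [h2]
    · simp [h1]
  refine ⟨fun i => ∑ p, Φ i p * Φ i p, fun i =>
    Finset.sum_nonneg fun p _ => mul_self_nonneg _, ?_, ?_⟩
  · ext i i'
    by_cases h : i = i'
    · subst h
      simp [Matrix.mul_apply, Matrix.diagonal_apply_eq]
    · rw [Matrix.diagonal_apply_ne _ h]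
      simp only [Matrix.mul_apply, Matrix.transpose_apply]
      exact Finset.sum_eq_zero fun p _ => key i i' h p
  · ext i i'
    simp only [Matrix.mul_apply, Matrix.transpose_apply, Matrix.sum_apply]
    rw [Fintype.sum_prod_type]
    rfl
end

section
/- Any fixed point (X*, P*) of the iteration X^{k+1} = Z − μ div P^{ref} + μ div P^{(k)}, P^{(k+1)}_{:,m,n,l} = (P^{(k)}_{:,m,n,l} + τ(∇X^{k+1})_{:,m,n,l})/(1 + τ‖(∇X^{k+1})_{:,m,n,l}‖), with τ > 0, satisfies the Euler–Lagrange equation X* − Z − μ div P^{X*} + μ div P^{ref} = 0, where P^{X*}_{:,m,n,l} = (∇X*)_{:,m,n,l}/‖(∇X*)_{:,m,n,l}‖ whenever the gradient is nonzero. -/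
/-- Horizontal forward difference with Neumann (zero at boundary) conditions. -/
noncomputable def gradH (H W L : ℕ) (X : Fin H → Fin W → Fin L → ℝ)
    (m : Fin H) (n : Fin W) (l : Fin L) : ℝ :=
  if h : (m : ℕ) + 1 < H then X ⟨(m : ℕ) + 1, h⟩ n l - X m n l else 0

/-- Vertical forward difference with Neumann (zero at boundary) conditions. -/
noncomputable def gradV (H W L : ℕ) (X : Fin H → Fin W → Fin L → ℝ)
    (m : Fin H) (n : Fin W) (l : Fin L) : ℝ :=
  if h : (n : ℕ) + 1 < W then X m ⟨(n : ℕ) + 1, h⟩ l - X m n l else 0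

/-- Pointwise Euclidean norm of the discrete spatial gradient. -/
noncomputable def gnorm (H W L : ℕ) (X : Fin H → Fin W → Fin L → ℝ)
    (m : Fin H) (n : Fin W) (l : Fin L) : ℝ :=
  Real.sqrt (gradH H W L X m n l ^ 2 + gradV H W L X m n l ^ 2)

/-- Discrete isotropic 3D total variation. -/
noncomputable def fTV (H W L : ℕ) (X : Fin H → Fin W → Fin L → ℝ) : ℝ :=
  ∑ m, ∑ n, ∑ l, gnorm H W L X m n l

/-- First component of the normalized-gradient dual field `P^X`. -/
noncomputable def P1 (H W L : ℕ) (X : Fin H → Fin W → Fin L → ℝ)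
    (m : Fin H) (n : Fin W) (l : Fin L) : ℝ :=
  if gnorm H W L X m n l = 0 then 0 else gradH H W L X m n l / gnorm H W L X m n l

/-- Second component of the normalized-gradient dual field `P^X`. -/
noncomputable def P2 (H W L : ℕ) (X : Fin H → Fin W → Fin L → ℝ)
    (m : Fin H) (n : Fin W) (l : Fin L) : ℝ :=
  if gnorm H W L X m n l = 0 then 0 else gradV H W L X m n l / gnorm H W L X m n l

/-- Discrete divergence, the negative adjoint of the discrete gradient. -/
noncomputable def divOp (H W L : ℕ) (Q1 Q2 : Fin H → Fin W → Fin L → ℝ)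
    (m : Fin H) (n : Fin W) (l : Fin L) : ℝ :=
  Q1 m n l - (if h : 0 < (m : ℕ) then Q1 ⟨(m : ℕ) - 1, by have := m.2; omega⟩ n l else 0)
    + Q2 m n l - (if h : 0 < (n : ℕ) then Q2 m ⟨(n : ℕ) - 1, by have := n.2; omega⟩ l else 0)

/-- Any fixed point of the primal-dual iteration satisfies the Euler–Lagrange
equation `X* - Z - μ div P^{X*} + μ div P^{ref} = 0`, where `P^{X*}` agrees with
the normalized gradient of `X*` wherever that gradient is nonzero. -/
theorem fixed_point_satisfies_euler_lagrange (H W L : ℕ) (τ μ : ℝ) (hτ : 0 < τ)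
    (Z Pref1 Pref2 Xs Ps1 Ps2 : Fin H → Fin W → Fin L → ℝ)
    (hX : ∀ m n l, Xs m n l =
      Z m n l - μ * divOp H W L Pref1 Pref2 m n l + μ * divOp H W L Ps1 Ps2 m n l)
    (hP1 : ∀ m n l, Ps1 m n l =
      (Ps1 m n l + τ * gradH H W L Xs m n l) / (1 + τ * gnorm H W L Xs m n l))
    (hP2 : ∀ m n l, Ps2 m n l =
      (Ps2 m n l + τ * gradV H W L Xs m n l) / (1 + τ * gnorm H W L Xs m n l)) :
    ∃ Q1 Q2 : Fin H → Fin W → Fin L → ℝ,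
      (∀ m n l, gnorm H W L Xs m n l ≠ 0 →
        Q1 m n l = gradH H W L Xs m n l / gnorm H W L Xs m n l ∧
        Q2 m n l = gradV H W L Xs m n l / gnorm H W L Xs m n l) ∧
      (∀ m n l, Xs m n l - Z m n l - μ * divOp H W L Q1 Q2 m n l
          + μ * divOp H W L Pref1 Pref2 m n l = 0) := by
  refine ⟨Ps1, Ps2, fun m n l hg => ?_, fun m n l => by have := hX m n l; linarith⟩
  have hgnn : 0 ≤ gnorm H W L Xs m n l := Real.sqrt_nonneg _
  have hden : (0:ℝ) < 1 + τ * gnorm H W L Xs m n l := by positivity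
  constructor
  · have h := hP1 m n l
    field_simp at h
    field_simp
    nlinarith [h]
  · have h := hP2 m n l
    field_simp at h
    field_simp
    nlinarith [h]
end
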